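/- If α · u(v) ≥ β · Σ_{w ∈ V} s(v,w) for every v ∈ V, then f is monotone non-decreasing: for all B ⊆ A ⊆ V, f(B) ≤ f(A). -/

import Mathlib

open Finset

/-- If the weighted unary terms dominate the pairwise terms, the pairwise objective
is monotone non-decreasing. -/
theorem pairwise_objective_monotone {V : Type*} [Fintype V] [DecidableEq V]
    (α β : ℝ) (hα : 0 < α) (hβ : 0 ≤ β)
    (u : V → ℝ) (s : V → V → ℝ)
    (hsymm : ∀ v w, s v w = s w v) (hnn : ∀ v w, 0 ≤ s v w)
    (hdiag : ∀ v, s v v = 0)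
    (f : Finset V → ℝ)
    (hf : ∀ S : Finset V, f S = α * ∑ v ∈ S, u v - (β / 2) * ∑ v ∈ S, ∑ w ∈ S, s v w)
    (hdom : ∀ v : V, α * u v ≥ β * ∑ w, s v w) :
    ∀ A B : Finset V, B ⊆ A → f B ≤ f A := by
  have key : ∀ (S : Finset V) (x : V), x ∉ S → f S ≤ f (insert x S) := by
    intro S x hx
    have hsum : ∑ v ∈ insert x S, ∑ w ∈ insert x S, s v w
        = (∑ v ∈ S, ∑ w ∈ S, s v w) + 2 * ∑ w ∈ S, s x w := by
      rw [sum_insert hx]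
      have : ∀ v ∈ S, ∑ w ∈ insert x S, s v w = s v x + ∑ w ∈ S, s v w := by
        intro v _; rw [sum_insert hx]
      rw [sum_insert hx, hdiag, sum_congr rfl this, sum_add_distrib]
      have : ∑ v ∈ S, s v x = ∑ w ∈ S, s x w := by
        exact sum_congr rfl fun v _ => hsymm v x
      rw [this]; ring
    rw [hf, hf, sum_insert hx, hsum]
    have h1 : β * ∑ w ∈ S, s x w ≤ β * ∑ w, s x w := by
      apply mul_le_mul_of_nonneg_left _ hβ
      exact sum_le_sum_of_subset_of_nonneg (subset_univ S) (fun w _ _ => hnn x w)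
    have h2 := hdom x
    nlinarith
  intro A B hBA
  have hA : A = B ∪ (A \ B) := by
    rw [union_sdiff_self_eq_union, union_eq_right.mpr hBA]
  rw [hA]
  have hd : Disjoint B (A \ B) := disjoint_sdiff
  generalize A \ B = T at hd ⊢
  induction T using Finset.induction_on with
  | empty => simp
  | insert _ _ ha =>
    rename_i a T ih
    have hd' : Disjoint B T := hd.mono_right (subset_insert a T)
    have haB : a ∉ B ∪ T := by
      simp only [mem_union, not_or]
      exact ⟨fun h => (disjoint_left.mp hd) h (mem_insert_self a T), ha⟩
    calc f B ≤ f (B ∪ T) := ih hd'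
      _ ≤ f (insert a (B ∪ T)) := key _ a haB
      _ = f (B ∪ insert a T) := by rw [union_insert]
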